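/- Let c, d be generalized geodesics in a metric space X and t₀ ∈ ℝ. Then d_X(c(t₀), d(t₀)) ≤ e^{|t₀|} · d_FS(c,d) + 2. -/

import Mathlib

open Metric Real MeasureTheory Set

variable {X : Type*}

/-- Witness data for a generalized geodesic: `c` is locally constant outside the
interval `(a, b)` and restricts to an isometric embedding on `[a, b]`. -/
def GenGeodesicWitness [MetricSpace X] (c : ℝ → X) (a b : EReal) : Prop :=
  a ≤ b ∧ a ≠ ⊤ ∧ b ≠ ⊥ ∧
    (∀ s t : ℝ, (s : EReal) ≤ a → (t : EReal) ≤ a → c s = c t) ∧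
    (∀ s t : ℝ, b ≤ (s : EReal) → b ≤ (t : EReal) → c s = c t) ∧
    (∀ s t : ℝ, a ≤ (s : EReal) → (s : EReal) ≤ b → a ≤ (t : EReal) → (t : EReal) ≤ b →
      dist (c s) (c t) = |s - t|)

/-- A generalized geodesic in a metric space. -/
def IsGenGeodesic [MetricSpace X] (c : ℝ → X) : Prop := ∃ a b : EReal, GenGeodesicWitness c a b

/-- The metric of the flow space `FS(X)`. -/
noncomputable def fsDist [MetricSpace X] (c d : ℝ → X) : ℝ :=
  ∫ t : ℝ, dist (c t) (d t) / (2 * Real.exp |t|)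

/-- Generalized geodesics are 1-Lipschitz. -/
lemma IsGenGeodesic.dist_le [MetricSpace X] {c : ℝ → X} (hc : IsGenGeodesic c) (s t : ℝ) :
    dist (c s) (c t) ≤ |s - t| := by
  obtain ⟨a, b, hab, haT, hbB, hA, hB, hI⟩ := hc
  have aux : ∀ s t : ℝ, s ≤ t → dist (c s) (c t) ≤ t - s := by
    intro s t hst
    by_cases h1 : (t : EReal) ≤ a
    · rw [hA s t (le_trans (by exact_mod_cast hst) h1) h1, dist_self]; linarith
    by_cases h2 : b ≤ (s : EReal)
    · rw [hB s t h2 (h2.trans (by exact_mod_cast hst)), dist_self]; linarith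
    push_neg at h1 h2
    obtain ⟨s', hs'a, hs'b, hss', hs't, hcs⟩ :
        ∃ s' : ℝ, a ≤ (s' : EReal) ∧ (s' : EReal) ≤ b ∧ s ≤ s' ∧ s' ≤ t ∧ c s = c s' := by
      by_cases hs : a ≤ (s : EReal)
      · exact ⟨s, hs, h2.le, le_rfl, hst, rfl⟩
      · push_neg at hs
        lift a to ℝ using ⟨haT, hs.ne_bot⟩
        refine ⟨a, le_rfl, hab, ?_, ?_, hA s a hs.le le_rfl⟩
        · exact_mod_cast hs.le
        · exact_mod_cast h1.le
    obtain ⟨t', ht'a, ht'b, hst', ht't, hct⟩ :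
        ∃ t' : ℝ, a ≤ (t' : EReal) ∧ (t' : EReal) ≤ b ∧ s ≤ t' ∧ t' ≤ t ∧ c t = c t' := by
      by_cases ht : (t : EReal) ≤ b
      · exact ⟨t, h1.le, ht, hst, le_rfl, rfl⟩
      · push_neg at ht
        lift b to ℝ using ⟨ht.ne_top, hbB⟩
        refine ⟨b, hab, le_rfl, ?_, ?_, hB t b ht.le le_rfl⟩
        · exact_mod_cast h2.le
        · exact_mod_cast ht.le
    calc dist (c s) (c t) = dist (c s') (c t') := by rw [hcs, hct]
      _ = |s' - t'| := hI s' t' hs'a hs'b ht'a ht'b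
      _ ≤ t - s := abs_sub_le_iff.mpr ⟨by linarith, by linarith⟩
  rcases le_total s t with h | h
  · rw [abs_of_nonpos (by linarith)]; simpa using aux s t h
  · rw [dist_comm, abs_of_nonneg (by linarith)]; exact aux t s h

lemma IsGenGeodesic.continuous [MetricSpace X] {c : ℝ → X} (hc : IsGenGeodesic c) :
    Continuous c := by
  refine (LipschitzWith.of_dist_le_mul (K := 1) fun s t => ?_).continuous
  simpa [Real.dist_eq] using hc.dist_le s t

lemma calc_pos (L : ℝ) :
    ∫ s in (0:ℝ)..L, (2*L - 2*s) * Real.exp (-s) = 2*Real.exp (-L) + 2*L - 2 := by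
  have hderiv : ∀ s ∈ uIcc (0:ℝ) L,
      HasDerivAt (fun s => (2*s - 2*L + 2) * Real.exp (-s)) ((2*L - 2*s) * Real.exp (-s)) s := by
    intro s _
    have h1 : HasDerivAt (fun s : ℝ => 2*s - 2*L + 2) 2 s := by
      simpa using (((hasDerivAt_id s).const_mul 2).sub_const (2*L)).add_const 2
    have h2 : HasDerivAt (fun s : ℝ => Real.exp (-s)) (-Real.exp (-s)) s := by
      simpa [Function.comp_def] using (Real.hasDerivAt_exp (-s)).comp s (hasDerivAt_neg s)
    exact (h1.mul h2).congr_deriv (by ring)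
  have hint : IntervalIntegrable (fun s => (2*L - 2*s) * Real.exp (-s)) volume 0 L :=
    (Continuous.mul (by continuity) (by continuity)).intervalIntegrable _ _
  rw [intervalIntegral.integral_eq_sub_of_hasDerivAt hderiv hint]
  simp [Real.exp_zero]; ring

lemma calc_sym (L : ℝ) (hL : 0 ≤ L) :
    ∫ s in (-L)..L, (2*L - 2*|s|) * Real.exp (-|s|) = 2*(2*Real.exp (-L) + 2*L - 2) := by
  set g : ℝ → ℝ := fun s => (2*L - 2*|s|) * Real.exp (-|s|) with hg
  have hcont : Continuous g := Continuous.mul (by continuity) (by continuity)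
  have hsplit : ∫ s in (-L)..L, g s = (∫ s in (-L)..(0:ℝ), g s) + ∫ s in (0:ℝ)..L, g s :=
    (intervalIntegral.integral_add_adjacent_intervals
      (hcont.intervalIntegrable _ _) (hcont.intervalIntegrable _ _)).symm
  have hneg : ∫ s in (-L)..(0:ℝ), g s = ∫ s in (0:ℝ)..L, g s := by
    have h := intervalIntegral.integral_comp_neg (a := (0:ℝ)) (b := L) g
    simp only [neg_zero] at h
    rw [← h]
    exact intervalIntegral.integral_congr (fun x _ => by simp [hg, abs_neg])
  have hpos : ∫ s in (0:ℝ)..L, g s = ∫ s in (0:ℝ)..L, (2*L - 2*s) * Real.exp (-s) := by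
    refine intervalIntegral.integral_congr (fun x hx => ?_)
    rw [uIcc_of_le hL] at hx
    simp [hg, abs_of_nonneg hx.1]
  rw [hsplit, hneg, hpos, calc_pos]; ring

lemma integrable_exp_neg_half_abs : Integrable (fun t : ℝ => Real.exp (-(|t|/2))) := by
  have h1 : IntegrableOn (fun t : ℝ => Real.exp (-(|t|/2))) (Ioi 0) := by
    refine (exp_neg_integrableOn_Ioi 0 (by norm_num : (0:ℝ) < 1/2)).congr_fun
      (fun x hx => ?_) measurableSet_Ioi
    rw [abs_of_pos hx]; ring_nf
  have h2 : IntegrableOn (fun t : ℝ => Real.exp (-(|t|/2))) (Iic 0) := by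
    rw [← Measure.map_neg_eq_self (volume : Measure ℝ)]
    have m : MeasurableEmbedding fun x : ℝ => -x := (Homeomorph.neg ℝ).measurableEmbedding
    rw [m.integrableOn_map_iff]
    simp_rw [Function.comp_def, abs_neg, neg_preimage, neg_Iic, neg_zero]
    exact Iff.mpr integrableOn_Ici_iff_integrableOn_Ioi h1
  have := h2.union h1
  rwa [Iic_union_Ioi, integrableOn_univ] at this

/-- Comparison of the flow-space metric with the metric on `X`:
`d_X(c(t₀), d(t₀)) ≤ e^{|t₀|} · d_FS(c,d) + 2`. -/
theorem dist_eval_le [MetricSpace X] (c d : ℝ → X)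
    (hc : IsGenGeodesic c) (hd : IsGenGeodesic d) (t₀ : ℝ) :
    dist (c t₀) (d t₀) ≤ Real.exp |t₀| * fsDist c d + 2 := by
  set f : ℝ → ℝ := fun t => dist (c t) (d t) / (2 * Real.exp |t|) with hf
  have hfs : fsDist c d = ∫ t : ℝ, f t := rfl
  set D : ℝ := dist (c t₀) (d t₀) with hDdef
  have hD0 : 0 ≤ D := dist_nonneg
  have hfnonneg : ∀ t, 0 ≤ f t := fun t => by positivity
  have hfcont : Continuous f := by
    refine Continuous.div (Continuous.dist hc.continuous hd.continuous) (by continuity)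
      (fun t => by positivity)
  -- key pointwise lower bound
  have key : ∀ t, D - 2*|t - t₀| ≤ dist (c t) (d t) := by
    intro t
    have h1 : dist (c t₀) (d t₀) ≤ dist (c t₀) (c t) + dist (c t) (d t) + dist (d t) (d t₀) :=
      dist_triangle4 _ _ _ _
    have h2 : dist (c t₀) (c t) ≤ |t - t₀| := by
      rw [abs_sub_comm]; exact hc.dist_le t₀ t
    have h3 : dist (d t) (d t₀) ≤ |t - t₀| := hd.dist_le t t₀
    linarith
  -- key pointwise upper bound
  have key2 : ∀ t, dist (c t) (d t) ≤ D + 2*|t - t₀| := by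
    intro t
    have h1 : dist (c t) (d t) ≤ dist (c t) (c t₀) + dist (c t₀) (d t₀) + dist (d t₀) (d t) :=
      dist_triangle4 _ _ _ _
    have h2 : dist (c t) (c t₀) ≤ |t - t₀| := hc.dist_le t t₀
    have h3 : dist (d t₀) (d t) ≤ |t - t₀| := by
      rw [abs_sub_comm]; exact hd.dist_le t₀ t
    linarith
  -- global integrability of f
  have hintf : Integrable f := by
    refine Integrable.mono' (g := fun t => (D/2 + |t₀| + 2) * Real.exp (-(|t|/2)))
      (integrable_exp_neg_half_abs.const_mul _) hfcont.aestronglyMeasurable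
      (ae_of_all _ fun t => ?_)
    rw [Real.norm_eq_abs, abs_of_nonneg (hfnonneg t)]
    have s1 : f t ≤ (D + 2*|t| + 2*|t₀|) / (2 * Real.exp |t|) := by
      have h5 : |t - t₀| ≤ |t| + |t₀| := abs_sub _ _
      have hk := key2 t
      show dist (c t) (d t) / (2 * Real.exp |t|) ≤ (D + 2*|t| + 2*|t₀|) / (2 * Real.exp |t|)
      exact div_le_div₀ (by positivity) (by linarith) (by positivity) le_rfl
    have s2 : (D + 2*|t| + 2*|t₀|) / (2 * Real.exp |t|)
        = (D/2 + |t₀| + |t|) * Real.exp (-|t|) := by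
      rw [Real.exp_neg]
      have := Real.exp_ne_zero |t|
      field_simp
      ring
    have e1 : Real.exp (-|t|) = Real.exp (-(|t|/2)) * Real.exp (-(|t|/2)) := by
      rw [← Real.exp_add]; ring_nf
    have e2 : Real.exp (-(|t|/2)) ≤ 1 := Real.exp_le_one_iff.mpr (by have := abs_nonneg t; linarith)
    have e3 : |t| * Real.exp (-(|t|/2)) ≤ 2 := by
      have h6 : |t|/2 + 1 ≤ Real.exp (|t|/2) := Real.add_one_le_exp _
      have h7 : Real.exp (-(|t|/2)) = (Real.exp (|t|/2))⁻¹ := Real.exp_neg _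
      have h8 : 0 < Real.exp (|t|/2) := Real.exp_pos _
      rw [h7]
      rw [mul_inv_le_iff₀ h8]
      linarith
    have e4 : 0 < Real.exp (-(|t|/2)) := Real.exp_pos _
    have s3 : (D/2 + |t₀| + |t|) * Real.exp (-|t|) ≤ (D/2 + |t₀| + 2) * Real.exp (-(|t|/2)) := by
      rw [e1]
      have h0 : 0 ≤ D/2 + |t₀| := by positivity
      have t2 : |t| * Real.exp (-(|t|/2)) * Real.exp (-(|t|/2)) ≤ 2 * Real.exp (-(|t|/2)) :=
        mul_le_mul_of_nonneg_right e3 e4.le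
      have t1 : (D/2 + |t₀|) * (Real.exp (-(|t|/2)) * Real.exp (-(|t|/2)))
          ≤ (D/2 + |t₀|) * Real.exp (-(|t|/2)) := by
        apply mul_le_mul_of_nonneg_left _ h0
        nlinarith
      nlinarith
    linarith
  rcases le_or_gt D 2 with hD2 | hD2
  · have h0 : 0 ≤ fsDist c d := by rw [hfs]; exact integral_nonneg hfnonneg
    nlinarith [Real.exp_pos |t₀|]
  -- main case D > 2
  set L : ℝ := D / 2 with hLdef
  have hL0 : 0 ≤ L := by positivity
  set h : ℝ → ℝ := fun t => (D - 2*|t - t₀|) / (2 * Real.exp (|t₀| + |t - t₀|)) with hh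
  have hhcont : Continuous h := by
    refine Continuous.div (by continuity) (by continuity) (fun t => by positivity)
  have step1 : ∫ t in Icc (t₀ - L) (t₀ + L), f t ≤ ∫ t, f t :=
    setIntegral_le_integral hintf (ae_of_all _ hfnonneg)
  have step2 : ∫ t in Icc (t₀ - L) (t₀ + L), h t ≤ ∫ t in Icc (t₀ - L) (t₀ + L), f t := by
    refine setIntegral_mono_on (hhcont.integrableOn_Icc) (hfcont.integrableOn_Icc)
      measurableSet_Icc (fun t ht => ?_)
    have habs : |t - t₀| ≤ L := abs_le.mpr ⟨by linarith [ht.1], by linarith [ht.2]⟩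
    have hm : 0 ≤ D - 2*|t - t₀| := by
      have : 2*L = D := by rw [hLdef]; ring
      linarith
    have e1 : Real.exp |t| ≤ Real.exp (|t₀| + |t - t₀|) := by
      refine Real.exp_le_exp.mpr ?_
      have := abs_add_le t₀ (t - t₀)
      simpa using this
    exact div_le_div₀ dist_nonneg (key t) (by positivity) (by linarith [e1])
  have hrw : ∀ t : ℝ, h t
      = (Real.exp |t₀|)⁻¹ / 2 * ((2*L - 2*|t - t₀|) * Real.exp (-|t - t₀|)) := by
    intro t
    simp only [hh]
    rw [hLdef, Real.exp_add, Real.exp_neg, div_eq_mul_inv]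
    simp only [mul_inv]
    ring
  have step3 : ∫ t in Icc (t₀ - L) (t₀ + L), h t
      = (Real.exp |t₀|)⁻¹ / 2 * (2*(2*Real.exp (-L) + 2*L - 2)) := by
    calc ∫ t in Icc (t₀ - L) (t₀ + L), h t
        = ∫ t in Icc (t₀ - L) (t₀ + L),
            (Real.exp |t₀|)⁻¹ / 2 * ((2*L - 2*|t - t₀|) * Real.exp (-|t - t₀|)) := by
          simp only [hrw]
      _ = (Real.exp |t₀|)⁻¹ / 2
            * ∫ t in Icc (t₀ - L) (t₀ + L), (2*L - 2*|t - t₀|) * Real.exp (-|t - t₀|) :=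
          integral_const_mul _ _
      _ = (Real.exp |t₀|)⁻¹ / 2
            * ∫ t in (t₀ - L)..(t₀ + L), (2*L - 2*|t - t₀|) * Real.exp (-|t - t₀|) := by
          rw [intervalIntegral.integral_of_le (by linarith), integral_Icc_eq_integral_Ioc]
      _ = (Real.exp |t₀|)⁻¹ / 2 * ∫ s in (-L)..L, (2*L - 2*|s|) * Real.exp (-|s|) := by
          rw [intervalIntegral.integral_comp_sub_right
            (fun s => (2*L - 2*|s|) * Real.exp (-|s|)) t₀]
          have e1 : t₀ - L - t₀ = -L := by ring
          have e2 : t₀ + L - t₀ = L := by ring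
          rw [e1, e2]
      _ = (Real.exp |t₀|)⁻¹ / 2 * (2*(2*Real.exp (-L) + 2*L - 2)) := by rw [calc_sym L hL0]
  have final : (Real.exp |t₀|)⁻¹ * (D - 2) ≤ fsDist c d := by
    rw [hfs]
    calc (Real.exp |t₀|)⁻¹ * (D - 2)
        ≤ (Real.exp |t₀|)⁻¹ / 2 * (2*(2*Real.exp (-L) + 2*L - 2)) := by
          have h2L : 2*L = D := by rw [hLdef]; ring
          have hpos : (0:ℝ) < (Real.exp |t₀|)⁻¹ := by positivity
          nlinarith [Real.exp_pos (-L)]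
      _ = ∫ t in Icc (t₀ - L) (t₀ + L), h t := step3.symm
      _ ≤ ∫ t in Icc (t₀ - L) (t₀ + L), f t := step2
      _ ≤ ∫ t, f t := step1
  have hE : 0 < Real.exp |t₀| := Real.exp_pos _
  have hmul := mul_le_mul_of_nonneg_left final hE.le
  rw [← mul_assoc, mul_inv_cancel₀ hE.ne', one_mul] at hmul
  linarith
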